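/- Let p(x) and q(x) be real polynomials with only negative zeros and p(0) > 0, q(0) > 0. If the pair (p(x), x·q(x)) is real — i.e., A·p(x) + B·x·q(x) has only real zeros for all real A, B — then for all A, B, C, D > 0 the polynomials A·p(x) + B·x·q(x) and C·p(x) + D·q(x) have only real zeros. -/

import Mathlib

open Polynomial

/-- The Jacobi polynomial `P_n^{(α,β)}` as a real polynomial in `x`. -/
noncomputable def jacobiP (α β : ℝ) (n : ℕ) : Polynomial ℝ :=
  C ((ascPochhammer ℝ n).eval (α + 1) / (n.factorial : ℝ)) *
    ∑ k ∈ Finset.range (n + 1),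
      C ((ascPochhammer ℝ k).eval (-(n : ℝ)) * (ascPochhammer ℝ k).eval ((n : ℝ) + α + β + 1) /
          ((k.factorial : ℝ) * (ascPochhammer ℝ k).eval (α + 1))) *
        (C (1 / 2 : ℝ) * (1 - X)) ^ k

/-- `φ_n^{(α,β)}(μ) = Σ_{k=0}^{[n/2]} (d/dx)^{2k} P_n^{(α,β)}(x)|_{x=1} · μ^k`. -/
noncomputable def phi (α β : ℝ) (n : ℕ) : Polynomial ℝ :=
  ∑ k ∈ Finset.range (n / 2 + 1),
    C ((Polynomial.derivative^[2 * k] (jacobiP α β n)).eval 1) * X ^ k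

/-- All complex zeros of `p` are real (i.e. `p` splits over `ℝ`). -/
def RealRooted (p : Polynomial ℝ) : Prop := (p.roots.card : ℕ) = p.natDegree

/-- All zeros of `p` are real and simple. -/
def AllRealSimple (p : Polynomial ℝ) : Prop := RealRooted p ∧ p.roots.Nodup

/-- Zeros of `g` and `h` interlace strictly. -/
def StrictlyInterlacing (g h : Polynomial ℝ) : Prop :=
  AllRealSimple g ∧ AllRealSimple h ∧
  (∀ x : ℝ, ¬(g.IsRoot x ∧ h.IsRoot x)) ∧
  (∀ x y : ℝ, g.IsRoot x → g.IsRoot y → x < y →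
      (∀ t : ℝ, g.IsRoot t → ¬(x < t ∧ t < y)) →
      ∃! z : ℝ, h.IsRoot z ∧ x < z ∧ z < y) ∧
  (∀ x y : ℝ, h.IsRoot x → h.IsRoot y → x < y →
      (∀ t : ℝ, h.IsRoot t → ¬(x < t ∧ t < y)) →
      ∃! z : ℝ, g.IsRoot z ∧ x < z ∧ z < y)

/-- `(g,h)` is a real pair: every real combination has only real zeros.
This is equivalent to non-strict interlacing of the zeros. -/
def RealPair (g h : Polynomial ℝ) : Prop :=
  ∀ a b : ℝ, RealRooted (C a * g + C b * h)

/-- The zero of `p` closest to the origin, when all zeros of `p` are negative. -/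
noncomputable def maxRoot (p : Polynomial ℝ) : ℝ := sSup {x : ℝ | p.IsRoot x}

/-- `f` is Hurwitz stable: all complex zeros lie in the open left half-plane. -/
def HurwitzStable (f : Polynomial ℝ) : Prop :=
  ∀ z : ℂ, Polynomial.aeval z f = 0 → z.re < 0


lemma aux_splits_of_complex_roots_real : ∀ (n : ℕ) (f : Polynomial ℝ), f.natDegree = n →
    (∀ z : ℂ, aeval z f = 0 → z.im = 0) → f.Splits := by
  intro n
  induction n using Nat.strong_induction_on with
  | _ n ih =>
    intro f hn h
    rcases le_or_gt f.degree 1 with hd | hd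
    · exact Splits.of_degree_le_one hd
    · have hf0 : f ≠ 0 := fun h0 => by simp [h0] at hd
      have hmap : (f.map (algebraMap ℝ ℂ)).degree ≠ 0 := by
        rw [degree_map]
        intro h0
        rw [h0] at hd
        exact absurd hd (by norm_num)
      obtain ⟨z, hz⟩ := IsAlgClosed.exists_root (f.map (algebraMap ℝ ℂ)) hmap
      have hz' : aeval z f = 0 := by rwa [IsRoot, eval_map, ← aeval_def] at hz
      have him := h z hz'
      have hzre : ((z.re : ℝ) : ℂ) = z := by
        apply Complex.ext <;> simp [him]
      have hr : f.IsRoot z.re := by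
        have h2 : aeval ((z.re : ℝ) : ℂ) f = 0 := by rw [hzre]; exact hz'
        rw [show ((z.re : ℝ) : ℂ) = algebraMap ℝ ℂ z.re from rfl,
          aeval_algebraMap_apply] at h2
        have h3 : aeval z.re f = 0 := by
          have := (map_eq_zero_iff (algebraMap ℝ ℂ) (algebraMap ℝ ℂ).injective).mp h2
          exact this
        simpa [IsRoot, ← aeval_def] using h3
      obtain ⟨g, hg⟩ := dvd_iff_isRoot.mpr hr
      have hg0 : g ≠ 0 := fun h0 => by rw [h0, mul_zero] at hg; exact hf0 hg
      have hdeg : g.natDegree < n := by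
        have := natDegree_mul (X_sub_C_ne_zero z.re) hg0
        rw [← hg, natDegree_X_sub_C] at this
        omega
      have hsg : g.Splits := by
        refine ih g.natDegree hdeg g rfl (fun w hw => h w ?_)
        rw [hg, map_mul, hw, mul_zero]
      rw [hg]
      exact (Splits.X_sub_C _).mul hsg

lemma aux_realRooted_of (f : Polynomial ℝ) (h : ∀ z : ℂ, aeval z f = 0 → z.im = 0) :
    RealRooted f := by
  have := aux_splits_of_complex_roots_real f.natDegree f rfl h
  exact (splits_iff_card_roots.mp this)

lemma aux_no_nonreal_root (f : Polynomial ℝ) (hf : RealRooted f) (hf0 : f ≠ 0)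
    (z : ℂ) (hz : z.im ≠ 0) : aeval z f ≠ 0 := by
  intro h
  have hs : f.Splits := splits_iff_card_roots.mpr hf
  have hroots := hs.roots_map (algebraMap ℝ ℂ)
  have hmem : z ∈ (f.map (algebraMap ℝ ℂ)).roots := by
    rw [mem_roots (by simpa using hf0), IsRoot, eval_map, ← aeval_def]
    exact h
  rw [hroots, Multiset.mem_map] at hmem
  obtain ⟨r, _, hr⟩ := hmem
  rw [← hr] at hz
  simp at hz

open ComplexConjugate

/-- If `(p, x·q)` is a real pair (with `p, q` having only negative zeros and positive values
at the origin), then all positive combinations `a·p + b·x·q` and `c·p + d·q` have only real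
zeros. -/
theorem real_pair_combinations (p q : Polynomial ℝ)
    (hp : RealRooted p) (hq : RealRooted q)
    (hpneg : ∀ x ∈ p.roots, x < 0) (hqneg : ∀ x ∈ q.roots, x < 0)
    (hp0 : 0 < p.eval 0) (hq0 : 0 < q.eval 0)
    (hpair : ∀ A B : ℝ, RealRooted (C A * p + C B * X * q)) :
    ∀ a b c d : ℝ, 0 < a → 0 < b → 0 < c → 0 < d →
      RealRooted (C a * p + C b * X * q) ∧ RealRooted (C c * p + C d * q) := by
  intro a b c d ha hb hc hd
  refine ⟨hpair a b, ?_⟩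
  have hpnz : p ≠ 0 := fun h => by simp [h] at hp0
  have hqnz : q ≠ 0 := fun h => by simp [h] at hq0
  set G : ℂ → ℝ := fun z => (z * aeval z q * conj (aeval z p)).im with hGdef
  have hGcont : Continuous G := by
    apply Complex.continuous_im.comp
    exact (continuous_id.mul q.continuous_aeval).mul (continuous_star.comp p.continuous_aeval)
  -- G never vanishes on the upper half-plane
  have key : ∀ z : ℂ, 0 < z.im → G z ≠ 0 := by
    intro z hz hG
    have hP : aeval z p ≠ 0 := aux_no_nonreal_root p hp hpnz z (ne_of_gt hz)
    set w : ℂ := z * aeval z q / aeval z p with hw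
    have hfac : z * aeval z q * conj (aeval z p) = w * Complex.normSq (aeval z p) := by
      rw [hw, div_mul_eq_mul_div, ← Complex.mul_conj]
      field_simp
    have hwim : w.im = 0 := by
      have h1 : (w * (Complex.normSq (aeval z p) : ℂ)).im = 0 := by rw [← hfac]; exact hG
      have h2 : (Complex.normSq (aeval z p)) ≠ 0 := by
        simpa [Complex.normSq_eq_zero] using hP
      simpa [Complex.mul_im, h2] using h1
    have hwre : w = ((w.re : ℝ) : ℂ) := by apply Complex.ext <;> simp [hwim]
    have heq : z * aeval z q = ((w.re : ℝ) : ℂ) * aeval z p := by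
      rw [← hwre, hw, div_mul_cancel₀ _ hP]
    set g : Polynomial ℝ := C w.re * p + C (-1) * X * q with hgdef
    have hgz : aeval z g = 0 := by
      simp only [hgdef, map_add, map_mul, aeval_C, aeval_X, map_neg, map_one]
      rw [show (algebraMap ℝ ℂ) w.re = ((w.re : ℝ) : ℂ) from rfl]
      linear_combination -heq
    have hgne : g ≠ 0 := by
      intro h0
      have he : w.re * p.eval 0 + (-1) * 0 * q.eval 0 = 0 := by
        have h1 := congrArg (Polynomial.eval 0) h0
        simpa only [hgdef, eval_add, eval_mul, eval_C, eval_X, eval_zero] using h1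
      have hA : w.re = 0 := by
        have : w.re * p.eval 0 = 0 := by linarith
        rcases mul_eq_zero.mp this with h' | h'
        · exact h'
        · exact absurd h' (ne_of_gt hp0)
      rw [hgdef, hA] at h0
      have hq0' : C (-1 : ℝ) * X * q = 0 := by simpa using h0
      rcases mul_eq_zero.mp hq0' with h' | h'
      · rcases mul_eq_zero.mp h' with h'' | h''
        · exact absurd h'' (by simp : C (-1 : ℝ) ≠ 0)
        · exact X_ne_zero h''
      · exact hqnz h'
    exact aux_no_nonreal_root g (hpair w.re (-1)) hgne z (ne_of_gt hz) hgz
  -- a point on the imaginary axis where G > 0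
  set h : ℝ → ℝ := fun t => (aeval ((t : ℂ) * Complex.I) q *
      conj (aeval ((t : ℂ) * Complex.I) p)).re with hhdef
  have hhcont : Continuous h := by
    apply Complex.continuous_re.comp
    exact ((q.continuous_aeval.comp (by continuity))).mul
      (continuous_star.comp (p.continuous_aeval.comp (by continuity)))
  have e1 : ∀ f : Polynomial ℝ, aeval ((0:ℂ)) f = ((f.eval 0 : ℝ) : ℂ) := by
    intro f
    rw [show (0:ℂ) = algebraMap ℝ ℂ (0:ℝ) by simp, aeval_algebraMap_apply]
    norm_num
  have hh0 : h 0 = q.eval 0 * p.eval 0 := by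
    simp [hhdef, e1 q, e1 p, Complex.conj_ofReal]
  have hh0pos : 0 < h 0 := by rw [hh0]; positivity
  have hev : ∀ᶠ t in nhds (0:ℝ), 0 < h t :=
    hhcont.continuousAt.eventually (eventually_gt_nhds hh0pos)
  have hev2 : ∀ᶠ t in nhdsWithin (0:ℝ) (Set.Ioi 0), 0 < h t ∧ t ∈ Set.Ioi 0 :=
    (hev.filter_mono nhdsWithin_le_nhds).and self_mem_nhdsWithin
  obtain ⟨ε, hhε, hε⟩ := hev2.exists
  have hεpos : (0:ℝ) < ε := hε
  have hGε : G ((ε : ℂ) * Complex.I) = ε * h ε := by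
    simp [hGdef, hhdef, mul_assoc, Complex.mul_im, Complex.mul_re]
  have hGεpos : 0 < G ((ε : ℂ) * Complex.I) := by
    rw [hGε]; exact mul_pos hεpos hhε
  -- no root of c p + d q in the open upper half-plane
  have claim : ∀ z : ℂ, 0 < z.im → aeval z (C c * p + C d * q) ≠ 0 := by
    intro z hz hroot
    have hP : aeval z p ≠ 0 := aux_no_nonreal_root p hp hpnz z (ne_of_gt hz)
    have hroot' : ((c : ℝ) : ℂ) * aeval z p + ((d : ℝ) : ℂ) * aeval z q = 0 := by
      simpa [map_add, map_mul, aeval_C] using hroot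
    have hd' : ((d : ℝ) : ℂ) ≠ 0 := by exact_mod_cast ne_of_gt hd
    have hQ : aeval z q = -(((c/d : ℝ)) : ℂ) * aeval z p := by
      rw [Complex.ofReal_div]
      field_simp
      linear_combination hroot'
    have hGz : G z = -(c/d) * Complex.normSq (aeval z p) * z.im := by
      rw [hGdef]
      simp only [hQ]
      rw [show z * (-(((c/d : ℝ)) : ℂ) * aeval z p) * conj (aeval z p)
          = -(((c/d : ℝ)) : ℂ) * (Complex.normSq (aeval z p) : ℂ) * z by
        rw [← Complex.mul_conj]; ring]
      simp [Complex.mul_im, Complex.mul_re]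
    have hGzneg : G z < 0 := by
      rw [hGz]
      have hns : 0 < Complex.normSq (aeval z p) := Complex.normSq_pos.mpr hP
      have hcd : 0 < c / d := div_pos hc hd
      nlinarith [mul_pos (mul_pos hcd hns) hz]
    have hS : IsPreconnected {w : ℂ | (0:ℝ) < w.im} :=
      (convex_halfSpace_im_gt 0).isPreconnected
    have hzS : z ∈ {w : ℂ | (0:ℝ) < w.im} := hz
    have hεS : ((ε : ℂ) * Complex.I) ∈ {w : ℂ | (0:ℝ) < w.im} := by
      simpa using hεpos
    have hsub := hS.intermediate_value hzS hεS hGcont.continuousOn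
    have h0mem : (0:ℝ) ∈ Set.Icc (G z) (G ((ε : ℂ) * Complex.I)) :=
      ⟨le_of_lt hGzneg, le_of_lt hGεpos⟩
    obtain ⟨w, hwS, hw0⟩ := hsub h0mem
    exact key w hwS hw0
  apply aux_realRooted_of
  intro z hz
  by_contra him
  rcases lt_or_gt_of_ne him with hlt | hgt
  · have hconj : aeval (conj z) (C c * p + C d * q) = 0 := by
      rw [Polynomial.aeval_conj, hz, map_zero]
    exact claim (conj z) (by simpa using hlt) hconj
  · exact claim z hgt hz
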